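/- There exists a constant C > 0 such that for every integer y ≥ 1, |INF(y, t_max(y))| ≤ C·y^{-2}, where t_max(y) = ⌊(y²−4)/3⌋ + 2. -/

import Mathlib

/-- Heat kernel of the simple symmetric random walk on ℤ:
`H x t = 2^{-t} * choose t ((t+x)/2)` when `t ≥ 0`, `t ≡ x (mod 2)`, `|x| ≤ t`; else `0`. -/
noncomputable def H (x t : ℤ) : ℝ :=
  if 0 ≤ t ∧ (2 : ℤ) ∣ (t - x) ∧ |x| ≤ t then
    (2 : ℝ) ^ (-t) * (t.toNat.choose ((t + x) / 2).toNat)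
  else 0

/-- Influence of a deterministic right-step compared to a random step. -/
noncomputable def INF (y t : ℤ) : ℝ :=
  if t ≤ 0 then 0 else H (y + 1) (t - 1) - H y t

/-- `t_max y = ⌊(y² - 4)/3⌋ + 2`. -/
def tmax (y : ℤ) : ℤ := Int.fdiv (y ^ 2 - 4) 3 + 2

lemma cb_sq (m : ℕ) : Nat.centralBinom m ^ 2 * (2*m+1) ≤ 16 ^ m := by
  induction m with
  | zero => simp [Nat.centralBinom]
  | succ m ih =>
    have hs := Nat.succ_mul_centralBinom_succ m
    have key : (m+1)^2 * (Nat.centralBinom (m+1) ^ 2 * (2*(m+1)+1)) ≤ (m+1)^2 * 16^(m+1) := by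
      calc (m+1)^2 * (Nat.centralBinom (m+1) ^ 2 * (2*(m+1)+1))
          = ((m+1) * Nat.centralBinom (m+1))^2 * (2*m+3) := by ring
        _ = (2*(2*m+1))^2 * Nat.centralBinom m ^ 2 * (2*m+3) := by rw [hs]; ring
        _ = (4*(2*m+1)*(2*m+3)) * (Nat.centralBinom m ^ 2 * (2*m+1)) := by ring
        _ ≤ (4*(2*m+1)*(2*m+3)) * 16^m := Nat.mul_le_mul_left _ ih
        _ ≤ (4*(2*m+2)^2) * 16^m := Nat.mul_le_mul_right _ (by nlinarith)
        _ = (m+1)^2 * 16^(m+1) := by ring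
    exact Nat.le_of_mul_le_mul_left key (by positivity)

lemma mid_sq (n : ℕ) : (n.choose (n/2))^2 * n ≤ 4^n := by
  rcases Nat.even_or_odd n with ⟨m, hm⟩ | ⟨m, hm⟩
  · subst hm
    have h : (m+m)/2 = m := by omega
    rw [h]
    have h2 : (m+m).choose m = Nat.centralBinom m := by
      rw [Nat.centralBinom, two_mul]
    rw [h2]
    calc Nat.centralBinom m ^2 * (m+m) ≤ Nat.centralBinom m ^ 2 * (2*m+1) :=
          Nat.mul_le_mul_left _ (by omega)
      _ ≤ 16^m := cb_sq m
      _ ≤ 4^(m+m) := by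
          rw [show (16:ℕ) = 4^2 by norm_num, ← pow_mul]
          exact Nat.pow_le_pow_right (by norm_num) (by omega)
  · subst hm
    have h : (2*m+1)/2 = m := by omega
    rw [h]
    have hsymm : (2*m+1).choose (m+1) = (2*m+1).choose m := by
      have := Nat.choose_symm (show m+1 ≤ 2*m+1 by omega)
      simpa [show 2*m+1-(m+1) = m by omega] using this.symm
    have hdb : Nat.centralBinom (m+1) = 2 * (2*m+1).choose m := by
      rw [Nat.centralBinom, show 2*(m+1) = (2*m+1)+1 by ring,
        Nat.choose_succ_succ' (2*m+1) m, hsymm]; ring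
    have key : 4 * ((2*m+1).choose m ^2 * (2*m+1)) ≤ 4 * 4^(2*m+1) := by
      calc 4 * ((2*m+1).choose m ^2 * (2*m+1))
          ≤ (2 * (2*m+1).choose m)^2 * (2*(m+1)+1) := by nlinarith [(2*m+1).choose m ^ 2]
        _ = Nat.centralBinom (m+1) ^2 * (2*(m+1)+1) := by rw [hdb]
        _ ≤ 16^(m+1) := cb_sq (m+1)
        _ = 4 * 4^(2*m+1) := by
            rw [show (16:ℕ) = 4^2 by norm_num, ← pow_mul]; ring
    exact Nat.le_of_mul_le_mul_left key (by norm_num)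

lemma H_nonneg (x t : ℤ) : 0 ≤ H x t := by
  unfold H; split
  · positivity
  · exact le_refl 0

lemma H_le_inv_sqrt (x t : ℤ) (ht : 1 ≤ t) : H x t ≤ 1 / Real.sqrt t := by
  have htR : (1:ℝ) ≤ (t:ℝ) := by exact_mod_cast ht
  have hsq : (0:ℝ) < Real.sqrt t := Real.sqrt_pos.2 (by linarith)
  unfold H; split
  · set n := t.toNat with hn
    have hnt : (n : ℤ) = t := Int.toNat_of_nonneg (by omega)
    have hn1 : 1 ≤ n := by omega
    have hp : (2:ℝ) ^ (-t) = ((2:ℝ)^n)⁻¹ := by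
      rw [← hnt, zpow_neg, zpow_natCast]
    rw [hp]
    calc ((2:ℝ)^n)⁻¹ * (n.choose (((t + x) / 2).toNat)) ≤ ((2:ℝ)^n)⁻¹ * (n.choose (n/2)) := by
          gcongr
          · exact_mod_cast Nat.choose_le_middle _ _
      _ ≤ 1 / Real.sqrt t := by
          rw [← hnt]
          rw [div_eq_inv_mul, inv_mul_eq_div, inv_mul_eq_div,
            div_le_div_iff₀ (by positivity) (by positivity), one_mul]
          push_cast
          have hcast : ((n.choose (n/2) : ℝ))^2 * (n:ℝ) ≤ (4:ℝ)^n := by exact_mod_cast mid_sq n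
          have h1 : ((n.choose (n/2) : ℝ)) * Real.sqrt n = Real.sqrt (((n.choose (n/2) : ℝ))^2 * n) := by
            rw [Real.sqrt_mul (by positivity), Real.sqrt_sq (by positivity)]
          rw [h1]
          calc Real.sqrt (((n.choose (n/2) : ℝ))^2 * n) ≤ Real.sqrt ((4:ℝ)^n) :=
                Real.sqrt_le_sqrt hcast
            _ = (2:ℝ)^n := by
                rw [show (4:ℝ) = 2^2 by norm_num, ← pow_mul, mul_comm, pow_mul]
                rw [Real.sqrt_sq (by positivity)]
  · positivity

lemma INF_eq (y t : ℤ) (hy : 1 ≤ y) (ht : 1 ≤ t) :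
    INF y t = -((y:ℝ)/(t:ℝ)) * H y t := by
  have htR : (0:ℝ) < (t:ℝ) := by exact_mod_cast (by omega : (0:ℤ) < t)
  rw [INF, if_neg (by omega)]
  by_cases hd : (2:ℤ) ∣ (t - y)
  · by_cases hyt : y ≤ t
    · rcases eq_or_lt_of_le hyt with heq | hlt
      · subst heq
        have h2 : H (y+1) (y-1) = 0 := by
          rw [H, if_neg]; push_neg; intro _ _
          rw [abs_of_pos (by omega)]; omega
        have h3 : H y y = (2:ℝ)^(-y) * 1 := by
          rw [H, if_pos ⟨by omega, by simp, (abs_of_pos (by omega : (0:ℤ) < y)).le⟩]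
          congr 1
          have h4 : (y + y)/2 = y := by omega
          rw [h4]
          norm_cast
          exact Nat.choose_self _
        rw [h2, h3]
        rw [div_self (ne_of_gt htR)]
        ring
      · have hyt2 : y ≤ t - 2 := by omega
        set k : ℕ := ((t + y) / 2).toNat with hk
        set n : ℕ := t.toNat with hn
        have hnt : (n:ℤ) = t := Int.toNat_of_nonneg (by omega)
        have hdd : (2:ℤ) ∣ (t + y) := by
          obtain ⟨c, hc⟩ := hd; exact ⟨c + y, by omega⟩
        have hk2 : ((k:ℤ)) = (t + y)/2 := Int.toNat_of_nonneg (by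
          apply Int.ediv_nonneg <;> omega)
        have h2k : 2 * ((t+y)/2) = t + y := by omega
        have hkn : (k:ℤ) ≤ (n:ℤ) - 1 := by omega
        have hn1 : 1 ≤ n := by omega
        have e1 : (t-1).toNat = n - 1 := by omega
        have e2 : ((t - 1 + (y+1))/2).toNat = k := by
          have : (t - 1 + (y+1))/2 = (t+y)/2 := by omega
          rw [this]
        have c1 : H (y+1) (t-1) = (2:ℝ)^(-(t-1)) * ((n-1).choose k) := by
          rw [H, if_pos, e1, e2]
          refine ⟨by omega, ⟨?_, ?_⟩⟩
          · obtain ⟨c, hc⟩ := hd; exact ⟨c - 1, by omega⟩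
          · rw [abs_of_pos (by omega)]; omega
        have c2 : H y t = (2:ℝ)^(-t) * (n.choose k) := by
          rw [H, if_pos ⟨by omega, hd, by rw [abs_of_pos (by omega)]; omega⟩]
        rw [c1, c2]
        have hid : (n.choose k) * (n - k) = n * ((n-1).choose k) := by
          have h5 := Nat.choose_mul_succ_eq (n-1) k
          rw [Nat.sub_add_cancel hn1] at h5
          exact h5.symm.trans (mul_comm _ _)
        have hnk : ((n:ℝ) - k) * 2 = (t:ℝ) - y := by
          have : ((n:ℤ) - k) * 2 = t - y := by omega
          exact_mod_cast this
        have hidR : ((n.choose k : ℝ)) * ((n:ℝ) - k) = (n:ℝ) * ((n-1).choose k) := by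
          have hkn' : k ≤ n := by omega
          have : ((n.choose k : ℝ)) * ((n - k : ℕ):ℝ) = (n:ℝ) * ((n-1).choose k) := by
            exact_mod_cast hid
          rwa [Nat.cast_sub hkn'] at this
        have hpow : (2:ℝ)^(-(t-1)) = 2 * (2:ℝ)^(-t) := by
          rw [show -(t-1) = -t + 1 by ring, zpow_add₀ (by norm_num : (2:ℝ) ≠ 0)]
          ring
        rw [hpow]
        have htn : (n:ℝ) = (t:ℝ) := by exact_mod_cast hnt
        have aux : 2 * (t:ℝ) * ((n-1).choose k) = ((t:ℝ) - (y:ℝ)) * (n.choose k) := by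
          linear_combination ((n.choose k : ℝ)) * hnk - 2*hidR - 2*(((n-1).choose k : ℝ))*htn
        have ht0 : (t:ℝ) ≠ 0 := ne_of_gt htR
        field_simp
        linear_combination aux
    · have h2 : H (y+1) (t-1) = 0 := by
        rw [H, if_neg]; push_neg; intro _ _; rw [abs_of_pos (by omega)]; omega
      have h3 : H y t = 0 := by
        rw [H, if_neg]; push_neg; intro _ _; rw [abs_of_pos (by omega)]; omega
      rw [h2, h3]; ring
  · have h2 : H (y+1) (t-1) = 0 := by
      rw [H, if_neg]; push_neg; intro _ h
      exact absurd (by obtain ⟨c,hc⟩ := h; exact ⟨c+1, by omega⟩ : (2:ℤ) ∣ (t - y)) hd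
    have h3 : H y t = 0 := by
      rw [H, if_neg]; push_neg; intro _ h; exact absurd h hd
    rw [h2, h3]; ring

theorem inf_tmax_upper :
    ∃ C : ℝ, 0 < C ∧ ∀ y : ℤ, 1 ≤ y →
      |INF y (tmax y)| ≤ C / (y : ℝ) ^ 2 := by
  refine ⟨6, by norm_num, ?_⟩
  intro y hy
  set t : ℤ := tmax y with htdef
  have hfm := Int.mul_fdiv_add_fmod (y^2 - 4) 3
  have hfm0 : 0 ≤ (y^2-4).fmod 3 := Int.fmod_nonneg_of_pos _ (by norm_num)
  have hfm3 : (y^2-4).fmod 3 < 3 := Int.fmod_lt_of_pos _ (by norm_num)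
  have h3t : y^2 ≤ 3 * t := by
    rw [htdef, tmax]; omega
  have hy2 : 1 ≤ y^2 := by nlinarith
  have ht1 : 1 ≤ t := by
    by_contra hcon
    push_neg at hcon
    have : 3 * t ≤ 0 := by omega
    omega
  -- real versions
  have hyR : (1:ℝ) ≤ (y:ℝ) := by exact_mod_cast hy
  have htR : (1:ℝ) ≤ (t:ℝ) := by exact_mod_cast ht1
  have h3tR : ((y:ℝ))^2 ≤ 3 * (t:ℝ) := by exact_mod_cast h3t
  have hH0 := H_nonneg y t
  have hH := H_le_inv_sqrt y t ht1
  have hsq : (0:ℝ) < Real.sqrt t := Real.sqrt_pos.2 (by linarith)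
  rw [INF_eq y t hy ht1]
  have habs : |(-((y:ℝ)/(t:ℝ))) * H y t| = ((y:ℝ)/(t:ℝ)) * H y t := by
    rw [abs_mul, abs_neg, abs_div, abs_of_nonneg (by linarith : (0:ℝ) ≤ (y:ℝ)),
      abs_of_nonneg (by linarith : (0:ℝ) ≤ (t:ℝ)), abs_of_nonneg hH0]
  rw [habs]
  have hstep1 : (y:ℝ)/(t:ℝ) ≤ 3/(y:ℝ) := by
    rw [div_le_div_iff₀ (by linarith) (by linarith)]
    nlinarith
  have hstep2 : 1 / Real.sqrt t ≤ 2 / (y:ℝ) := by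
    rw [div_le_div_iff₀ hsq (by linarith)]
    have h4 : ((y:ℝ))^2 ≤ 4 * (t:ℝ) := by linarith
    have : (y:ℝ) = Real.sqrt ((y:ℝ)^2) := (Real.sqrt_sq (by linarith)).symm
    rw [one_mul, this]
    calc Real.sqrt ((y:ℝ)^2) ≤ Real.sqrt (4 * t) := Real.sqrt_le_sqrt h4
      _ = 2 * Real.sqrt t := by
          rw [show (4:ℝ)*(t:ℝ) = (2*Real.sqrt t)^2 by
            rw [mul_pow, Real.sq_sqrt (by linarith)]; ring]
          exact Real.sqrt_sq (by positivity)
  calc ((y:ℝ)/(t:ℝ)) * H y t ≤ ((y:ℝ)/(t:ℝ)) * (1 / Real.sqrt t) := by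
        apply mul_le_mul_of_nonneg_left hH (by positivity)
    _ ≤ (3/(y:ℝ)) * (2/(y:ℝ)) := by
        apply mul_le_mul hstep1 hstep2 (by positivity) (by positivity)
    _ = 6 / (y:ℝ)^2 := by ring
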